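/- Let U be a vertex Lie algebra over ℂ. Define a bilinear bracket on U by [u,v] = Σ_{n≥0} ((−1)ⁿ/(n+1)!)·D^{n+1}(uₙv), a finite sum. Then (U, [·,·]) is a Lie algebra, namely [v,u] = −[u,v] and [u,[v,w]] − [v,[u,w]] = [[u,v],w] for all u,v,w ∈ U. (This is the transport of the Lie algebra structure of L₋(U) through the isomorphism u ↦ u₋₁.) -/

import Mathlib

open scoped BigOperators

noncomputable section

/-- A vertex Lie algebra over `ℂ`. -/
structure VertexLie (U : Type*) [AddCommGroup U] [Module ℂ U] where
  D : U →ₗ[ℂ] U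
  mul : ℕ → U →ₗ[ℂ] U →ₗ[ℂ] U
  trunc : ∀ u v : U, ∃ N : ℕ, ∀ n : ℕ, N ≤ n → mul n u v = 0
  dLeft : ∀ (n : ℕ) (u v : U), mul (n + 1) (D u) v = (-((n : ℂ) + 1)) • mul n u v
  dLeftZero : ∀ u v : U, mul 0 (D u) v = 0
  leibniz : ∀ (n : ℕ) (u v : U), D (mul n u v) = mul n (D u) v + mul n u (D v)
  skew : ∀ (n : ℕ) (u v : U),
    mul n u v =
      -∑ᶠ k : ℕ, (((-1 : ℂ) ^ (n + k)) / (Nat.factorial k : ℂ)) • ((D ^ k) (mul (n + k) v u))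
  jacobi : ∀ (k m n : ℕ) (u v w : U),
    ∑ᶠ i : ℕ, ((-1 : ℂ) ^ i * (Nat.choose k i : ℂ)) •
        (mul (m + k - i) u (mul (n + i) v w)
          - ((-1 : ℂ) ^ k) • mul (n + k - i) v (mul (m + i) u w))
      = ∑ᶠ i : ℕ, ((Nat.choose m i : ℂ)) • mul (m + n - i) (mul (k + i) u v) w


variable {U : Type*} [AddCommGroup U] [Module ℂ U]

/-- The bracket `[u,v] = Σ_{n≥0} ((−1)ⁿ/(n+1)!)·D^{n+1}(uₙv)` on a vertex Lie algebra. -/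
def brkt (A : VertexLie U) (u v : U) : U :=
  ∑ᶠ n : ℕ, (((-1 : ℂ) ^ n) / (Nat.factorial (n + 1) : ℂ)) • ((A.D ^ (n + 1)) (A.mul n u v))

section Aux
variable {V : Type*} [AddCommMonoid V]

lemma sum_shrink (f : ℕ → V) {N N' : ℕ} (h : N ≤ N') (h0 : ∀ n, N ≤ n → f n = 0) :
    ∑ n ∈ Finset.range N', f n = ∑ n ∈ Finset.range N, f n := by
  refine (Finset.sum_subset (Finset.range_subset_range.2 h) ?_).symm
  intro x _ hnx
  exact h0 x (le_of_not_gt (by simpa using hnx))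

lemma sum_shift (f : ℕ → V) (t R M : ℕ) (hlow : ∀ m, m < t → f m = 0)
    (hhigh : ∀ m, t + R ≤ m → f m = 0) (hM : t + R ≤ M) :
    ∑ m ∈ Finset.range M, f m = ∑ a ∈ Finset.range R, f (t + a) := by
  have h1 : ∑ m ∈ Finset.range M, f m = ∑ m ∈ Finset.Ico t (t + R), f m := by
    symm
    apply Finset.sum_subset
    · intro x hx
      simp only [Finset.mem_Ico] at hx
      simp only [Finset.mem_range]; omega
    · intro x _ hnx
      simp only [Finset.mem_Ico, not_and, not_lt] at hnx
      by_cases hxt : x < t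
      · exact hlow x hxt
      · exact hhigh x (hnx (le_of_not_gt hxt))
  rw [h1, Finset.sum_Ico_eq_sum_range]
  simp

lemma sum_triangle (g : ℕ → ℕ → V) (P : ℕ) :
    ∑ n ∈ Finset.range P, ∑ k ∈ Finset.range (P - n), g n k
      = ∑ s ∈ Finset.range P, ∑ i ∈ Finset.range (s+1), g i (s - i) := by
  induction P with
  | zero => simp
  | succ P ih =>
    rw [Finset.sum_range_succ (fun s => ∑ i ∈ Finset.range (s+1), g i (s-i)) P, ← ih]
    rw [Finset.sum_range_succ]
    have e1 : ∀ n ∈ Finset.range P, ∑ k ∈ Finset.range (P+1-n), g n k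
        = (∑ k ∈ Finset.range (P-n), g n k) + g n (P-n) := by
      intro n hn
      rw [show P+1-n = (P-n)+1 by (have := Finset.mem_range.1 hn; omega), Finset.sum_range_succ]
    rw [Finset.sum_congr rfl e1, Finset.sum_add_distrib]
    rw [show P + 1 - P = 1 by omega, Finset.sum_range_one]
    rw [Finset.sum_range_succ (fun i => g i (P - i)) P]
    rw [show P - P = 0 by omega]
    abel

lemma sum_rect_to_diag (g : ℕ → ℕ → V) (N1 N2 P : ℕ) (h1 : P ≤ N1) (h2 : P ≤ N2)
    (h0 : ∀ n k, P ≤ n + k → g n k = 0) :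
    ∑ n ∈ Finset.range N1, ∑ k ∈ Finset.range N2, g n k
      = ∑ s ∈ Finset.range P, ∑ i ∈ Finset.range (s+1), g i (s-i) := by
  rw [← sum_triangle]
  rw [sum_shrink (fun n => ∑ k ∈ Finset.range N2, g n k) h1
    (fun n hn => Finset.sum_eq_zero (fun k _ => h0 n k (by omega)))]
  refine Finset.sum_congr rfl fun n hn => ?_
  exact sum_shrink _ (by omega) (fun k hk => h0 n k (by omega))

lemma sum_succ_split (f g h : ℕ → V) (n : ℕ)
    (hsplit : ∀ i, i < n + 1 → f (i+1) = g (i+1) + h i) (h0 : f 0 = g 0) (htop : g (n+1) = 0) :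
    ∑ j ∈ Finset.range (n+2), f j
      = (∑ j ∈ Finset.range (n+1), g j) + ∑ i ∈ Finset.range (n+1), h i := by
  rw [Finset.sum_range_succ' f (n+1)]
  rw [Finset.sum_congr rfl (fun i hi => hsplit i (Finset.mem_range.1 hi))]
  rw [Finset.sum_add_distrib, h0]
  have e := Finset.sum_range_succ' g (n+1)
  rw [Finset.sum_range_succ g (n+1), htop, add_zero] at e
  rw [e]
  abel

end Aux


lemma factC_ne (n : ℕ) : ((n.factorial : ℕ) : ℂ) ≠ 0 :=
  Nat.cast_ne_zero.2 (Nat.factorial_ne_zero n)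

lemma alt_sum (s : ℕ) :
    ∑ i ∈ Finset.range (s+1), (-1:ℂ)^i * (((s+1).choose (i+1) : ℕ) : ℂ) = 1 := by
  have h := Int.alternating_sum_range_choose (n := s+1)
  rw [if_neg (Nat.succ_ne_zero s)] at h
  have h2 : ∑ m ∈ Finset.range (s+1+1), (-1:ℂ)^m * (((s+1).choose m : ℕ) : ℂ) = 0 := by
    exact_mod_cast congrArg (fun z : ℤ => (z : ℂ)) h
  rw [Finset.sum_range_succ'] at h2
  have h3 : ∀ i ∈ Finset.range (s+1),
      (-1:ℂ)^(i+1) * (((s+1).choose (i+1) : ℕ) : ℂ)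
        = -((-1:ℂ)^i * (((s+1).choose (i+1) : ℕ) : ℂ)) := by
    intro i _
    rw [pow_succ]; ring
  rw [Finset.sum_congr rfl h3, Finset.sum_neg_distrib] at h2
  simp only [pow_zero, Nat.choose_zero_right, Nat.cast_one, one_mul] at h2
  linear_combination -h2

lemma S3 (s : ℕ) :
    ∑ i ∈ Finset.range (s+1), (-1:ℂ)^i / (((i+1).factorial : ℕ) * ((s-i).factorial : ℕ) : ℂ)
      = 1 / (((s+1).factorial : ℕ) : ℂ) := by
  have h : ∀ i ∈ Finset.range (s+1),
      (-1:ℂ)^i / (((i+1).factorial : ℕ) * ((s-i).factorial : ℕ) : ℂ)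
        = (1 / (((s+1).factorial : ℕ) : ℂ)) * ((-1:ℂ)^i * (((s+1).choose (i+1) : ℕ) : ℂ)) := by
    intro i hi
    have hle : i + 1 ≤ s + 1 := by have := Finset.mem_range.1 hi; omega
    have hch := Nat.choose_mul_factorial_mul_factorial hle
    rw [show s+1-(i+1) = s - i by omega] at hch
    have hc : (((s+1).choose (i+1) * (i+1).factorial * (s-i).factorial : ℕ) : ℂ)
        = (((s+1).factorial : ℕ) : ℂ) := by exact_mod_cast congrArg (Nat.cast : ℕ → ℂ) hch
    push_cast at hc
    have h1 := factC_ne (i+1)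
    have h2 := factC_ne (s-i)
    have h3 := factC_ne (s+1)
    have h4 : (((s+1).choose (i+1) : ℕ) : ℂ) ≠ 0 :=
      Nat.cast_ne_zero.2 (Nat.choose_pos hle).ne'
    push_cast at h1 h2 h3 h4 ⊢
    field_simp
    linear_combination (-1:ℂ) * hc
  rw [Finset.sum_congr rfl h, ← Finset.mul_sum, alt_sum, mul_one]

lemma S1 (M : ℕ) : ∀ a : ℕ,
    ∑ j ∈ Finset.range (M+1),
      (-1:ℂ)^(a+j) * ((M.choose j : ℕ) : ℂ) * ((j.factorial : ℕ) : ℂ)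
        * (((a+j).choose j : ℕ) : ℂ) / (((a+j+1).factorial : ℕ) : ℂ)
    = (-1:ℂ)^a * ((M.factorial : ℕ) : ℂ) / (((a+M+1).factorial : ℕ) : ℂ) := by
  induction M with
  | zero =>
    intro a
    simp
  | succ M ih =>
    intro a
    have hsplit : ∀ i, i < M + 1 →
        (-1:ℂ)^(a+(i+1)) * (((M+1).choose (i+1) : ℕ) : ℂ) * (((i+1).factorial : ℕ) : ℂ)
          * (((a+(i+1)).choose (i+1) : ℕ) : ℂ) / (((a+(i+1)+1).factorial : ℕ) : ℂ)
        = (-1:ℂ)^(a+(i+1)) * ((M.choose (i+1) : ℕ) : ℂ) * (((i+1).factorial : ℕ) : ℂ)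
            * (((a+(i+1)).choose (i+1) : ℕ) : ℂ) / (((a+(i+1)+1).factorial : ℕ) : ℂ)
          + ((a:ℂ)+1) * ((-1:ℂ)^((a+1)+i) * ((M.choose i : ℕ) : ℂ) * ((i.factorial : ℕ) : ℂ)
              * ((((a+1)+i).choose i : ℕ) : ℂ) / ((((a+1)+i+1).factorial : ℕ) : ℂ)) := by
      intro i _
      have hcr : ((a+i+1).choose (i+1)) * (i+1) = ((a+i+1).choose i) * (a+1) := by
        have := Nat.choose_succ_right_eq (a+i+1) i
        rwa [show a+i+1-i = a+1 by omega] at this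
      have h2 : M.choose i * ((i+1) * i.factorial) * ((a+i+1).choose (i+1))
          = (a+1) * (M.choose i * i.factorial * ((a+i+1).choose i)) := by
        calc M.choose i * ((i+1) * i.factorial) * ((a+i+1).choose (i+1))
            = M.choose i * i.factorial * (((a+i+1).choose (i+1)) * (i+1)) := by ring
          _ = M.choose i * i.factorial * (((a+i+1).choose i) * (a+1)) := by rw [hcr]
          _ = (a+1) * (M.choose i * i.factorial * ((a+i+1).choose i)) := by ring
      have hN : (M+1).choose (i+1) * (i+1).factorial * ((a+i+1).choose (i+1))
          = M.choose (i+1) * (i+1).factorial * ((a+i+1).choose (i+1))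
            + (a+1) * M.choose i * i.factorial * ((a+i+1).choose i) := by
        have h2' : (a+1) * M.choose i * i.factorial * ((a+i+1).choose i)
            = M.choose i * ((i+1) * i.factorial) * ((a+i+1).choose (i+1)) := by
          rw [h2]; ring
        rw [Nat.choose_succ_succ, Nat.factorial_succ, h2']
        ring
      have hNc : (((M+1).choose (i+1) : ℕ) : ℂ) * (((i+1).factorial : ℕ) : ℂ)
            * (((a+i+1).choose (i+1) : ℕ) : ℂ)
          = ((M.choose (i+1) : ℕ) : ℂ) * (((i+1).factorial : ℕ) : ℂ)
              * (((a+i+1).choose (i+1) : ℕ) : ℂ)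
            + ((a:ℂ)+1) * ((M.choose i : ℕ) : ℂ) * ((i.factorial : ℕ) : ℂ)
              * (((a+i+1).choose i : ℕ) : ℂ) := by
        exact_mod_cast congrArg (Nat.cast : ℕ → ℂ) hN
      rw [show (a+1)+i = a+i+1 by omega]
      rw [show a+(i+1) = a+i+1 by omega]
      rw [show a+i+1+1 = a+i+2 by omega]
      rw [← mul_div_assoc, ← add_div]
      congr 1
      linear_combination ((-1:ℂ)^(a+i+1)) * hNc
    have h0 : (-1:ℂ)^(a+0) * (((M+1).choose 0 : ℕ) : ℂ) * (((0).factorial : ℕ) : ℂ)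
          * (((a+0).choose 0 : ℕ) : ℂ) / (((a+0+1).factorial : ℕ) : ℂ)
        = (-1:ℂ)^(a+0) * ((M.choose 0 : ℕ) : ℂ) * (((0).factorial : ℕ) : ℂ)
          * (((a+0).choose 0 : ℕ) : ℂ) / (((a+0+1).factorial : ℕ) : ℂ) := by
      norm_num
    have htop : (-1:ℂ)^(a+(M+1)) * ((M.choose (M+1) : ℕ) : ℂ) * (((M+1).factorial : ℕ) : ℂ)
          * (((a+(M+1)).choose (M+1) : ℕ) : ℂ) / (((a+(M+1)+1).factorial : ℕ) : ℂ) = 0 := by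
      simp [Nat.choose_succ_self]
    calc (∑ j ∈ Finset.range (M+1+1),
          (-1:ℂ)^(a+j) * (((M+1).choose j : ℕ) : ℂ) * ((j.factorial : ℕ) : ℂ)
            * (((a+j).choose j : ℕ) : ℂ) / (((a+j+1).factorial : ℕ) : ℂ))
        = (∑ j ∈ Finset.range (M+1),
            (-1:ℂ)^(a+j) * ((M.choose j : ℕ) : ℂ) * ((j.factorial : ℕ) : ℂ)
              * (((a+j).choose j : ℕ) : ℂ) / (((a+j+1).factorial : ℕ) : ℂ))
          + ∑ i ∈ Finset.range (M+1),
              ((a:ℂ)+1) * ((-1:ℂ)^((a+1)+i) * ((M.choose i : ℕ) : ℂ) * ((i.factorial : ℕ) : ℂ)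
                * ((((a+1)+i).choose i : ℕ) : ℂ) / ((((a+1)+i+1).factorial : ℕ) : ℂ)) :=
        sum_succ_split _ _ _ M hsplit h0 htop
      _ = (-1:ℂ)^a * ((M.factorial : ℕ) : ℂ) / (((a+M+1).factorial : ℕ) : ℂ)
          + ((a:ℂ)+1) * ((-1:ℂ)^(a+1) * ((M.factorial : ℕ) : ℂ) / ((((a+1)+M+1).factorial : ℕ) : ℂ)) := by
        rw [ih a, ← Finset.mul_sum, ih (a+1)]
      _ = (-1:ℂ)^a * (((M+1).factorial : ℕ) : ℂ) / (((a+(M+1)+1).factorial : ℕ) : ℂ) := by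
        rw [show (a+1)+M+1 = (a+M+1)+1 by omega, show a+(M+1)+1 = (a+M+1)+1 by omega,
          Nat.factorial_succ (a+M+1), Nat.factorial_succ M]
        have h1 := factC_ne (a+M+1)
        have h2 : ((a+M+1:ℕ):ℂ) + 1 ≠ 0 := Nat.cast_add_one_ne_zero (a+M+1)
        push_cast at h1 h2 ⊢
        field_simp
        ring


lemma powpow (A : VertexLie U) (p q : ℕ) (x : U) :
    (A.D ^ p) ((A.D ^ q) x) = (A.D ^ (p + q)) x := by
  rw [pow_add, Module.End.mul_apply]

lemma brkt_eq_sum (A : VertexLie U) (x y : U) {N : ℕ} (hN : ∀ n, N ≤ n → A.mul n x y = 0) :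
    brkt A x y = ∑ n ∈ Finset.range N,
      (((-1 : ℂ) ^ n) / (Nat.factorial (n + 1) : ℂ)) • ((A.D ^ (n + 1)) (A.mul n x y)) := by
  apply finsum_eq_sum_of_support_subset
  intro n hn
  simp only [Function.mem_support] at hn
  rw [Finset.coe_range]
  refine Set.mem_Iio.2 ?_
  by_contra h
  push_neg at h
  exact hn (by rw [hN n h]; simp)

lemma mulDr (A : VertexLie U) (m : ℕ) (u x : U) :
    A.mul m u (A.D x) = A.D (A.mul m u x) + (m : ℂ) • A.mul (m-1) u x := by
  have h := A.leibniz m u x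
  cases m with
  | zero =>
    rw [A.dLeftZero, zero_add] at h
    rw [← h]
    simp
  | succ n =>
    rw [A.dLeft] at h
    have h2 : A.mul (n+1) u (A.D x)
        = A.D (A.mul (n+1) u x) - (-((n:ℂ)+1)) • A.mul n u x := by
      rw [h]; abel
    rw [h2, Nat.succ_sub_one]
    push_cast
    module


lemma claimA (A : VertexLie U) (k : ℕ) : ∀ (m : ℕ) (u x : U),
    A.mul m u ((A.D ^ k) x)
      = ∑ j ∈ Finset.range (k+1),
          (((k.choose j * j.factorial * (m.choose j) : ℕ)) : ℂ)
            • ((A.D ^ ((k+1)-(j+1))) (A.mul (m-j) u x)) := by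
  induction k with
  | zero =>
    intro m u x
    simp
  | succ k ih =>
    intro m u x
    have hpow : (A.D ^ (k+1)) x = A.D ((A.D ^ k) x) := by
      rw [pow_succ', Module.End.mul_apply]
    rw [hpow, mulDr, ih m u x, ih (m-1) u x, map_sum, Finset.smul_sum]
    have hL : ∀ j ∈ Finset.range (k+1),
        A.D ((((k.choose j * j.factorial * (m.choose j) : ℕ)) : ℂ)
            • ((A.D ^ ((k+1)-(j+1))) (A.mul (m-j) u x)))
        = (((k.choose j * j.factorial * (m.choose j) : ℕ)) : ℂ)
            • ((A.D ^ ((k+2)-(j+1))) (A.mul (m-j) u x)) := by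
      intro j hj
      rw [map_smul, ← Module.End.mul_apply, ← pow_succ']
      rw [show ((k+1)-(j+1))+1 = (k+2)-(j+1) by
        (have := Finset.mem_range.1 hj; omega)]
    have hR : ∀ j ∈ Finset.range (k+1),
        (m:ℂ) • ((((k.choose j * j.factorial * ((m-1).choose j) : ℕ)) : ℂ)
            • ((A.D ^ ((k+1)-(j+1))) (A.mul (m-1-j) u x)))
        = ((m : ℂ) * (((k.choose j * j.factorial * ((m-1).choose j) : ℕ)) : ℂ))
            • ((A.D ^ ((k+1)-(j+1))) (A.mul (m-1-j) u x)) := by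
      intro j _
      rw [smul_smul]
    rw [Finset.sum_congr rfl hL, Finset.sum_congr rfl hR]
    symm
    refine sum_succ_split _ _ _ k ?_ ?_ ?_
    · intro i hik
      have hm : m * ((m-1).choose i) = (m.choose (i+1)) * (i+1) := by
        cases m with
        | zero => simp
        | succ n => simpa [Nat.succ_sub_one] using Nat.add_one_mul_choose_eq n i
      have hN : (k+1).choose (i+1) * (i+1).factorial * (m.choose (i+1))
          = k.choose (i+1) * (i+1).factorial * (m.choose (i+1))
            + m * (k.choose i * i.factorial * ((m-1).choose i)) := by
        have h2 : m * (k.choose i * i.factorial * ((m-1).choose i))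
            = k.choose i * ((i+1) * i.factorial) * (m.choose (i+1)) := by
          calc m * (k.choose i * i.factorial * ((m-1).choose i))
              = k.choose i * i.factorial * (m * ((m-1).choose i)) := by ring
            _ = k.choose i * i.factorial * ((m.choose (i+1)) * (i+1)) := by rw [hm]
            _ = k.choose i * ((i+1) * i.factorial) * (m.choose (i+1)) := by ring
        rw [Nat.choose_succ_succ, Nat.factorial_succ, h2]
        ring
      have hNc : ((((k+1).choose (i+1) * (i+1).factorial * (m.choose (i+1)) : ℕ)) : ℂ)
          = (((k.choose (i+1) * (i+1).factorial * (m.choose (i+1)) : ℕ)) : ℂ)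
            + (m : ℂ) * (((k.choose i * i.factorial * ((m-1).choose i) : ℕ)) : ℂ) := by
        push_cast
        exact_mod_cast congrArg (Nat.cast : ℕ → ℂ) hN
      rw [show m - (i+1) = m-1-i by omega]
      rw [hNc, add_smul]
      simp only [show k+1+1-(i+1+1) = k-i by omega, show k+2-(i+1+1) = k-i by omega,
        show k+1-(i+1) = k-i by omega]
    · simp
    · simp [Nat.choose_succ_self]

lemma claimB (A : VertexLie U) (p : ℕ) : ∀ (m : ℕ) (y w : U),
    A.mul m ((A.D ^ p) y) w
      = (((-1:ℂ))^p * (((p.factorial * m.choose p : ℕ)) : ℂ)) • A.mul (m-p) y w := by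
  induction p with
  | zero =>
    intro m y w
    simp
  | succ p ih =>
    intro m y w
    have hpow : (A.D ^ (p+1)) y = A.D ((A.D ^ p) y) := by
      rw [pow_succ', Module.End.mul_apply]
    rw [hpow]
    cases m with
    | zero =>
      rw [A.dLeftZero]
      simp [Nat.choose_eq_zero_of_lt (by omega : (0:ℕ) < p+1)]
    | succ n =>
      rw [A.dLeft, ih n y w, smul_smul, Nat.succ_sub_succ]
      have hN : (p+1).factorial * ((n+1).choose (p+1)) = (n+1) * (p.factorial * (n.choose p)) := by
        have := Nat.add_one_mul_choose_eq n p
        calc (p+1).factorial * ((n+1).choose (p+1))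
            = p.factorial * ((n+1).choose (p+1) * (p+1)) := by rw [Nat.factorial_succ]; ring
          _ = p.factorial * ((n+1) * n.choose p) := by rw [← this]
          _ = (n+1) * (p.factorial * (n.choose p)) := by ring
      congr 1
      have hNc : (((p+1).factorial * ((n+1).choose (p+1)) : ℕ) : ℂ)
          = ((n:ℂ)+1) * (((p.factorial * (n.choose p) : ℕ)) : ℂ) := by
        push_cast
        push_cast at hN
        exact_mod_cast congrArg (Nat.cast : ℕ → ℂ) hN
      rw [hNc]
      ring

lemma comm_formula (A : VertexLie U) (m n : ℕ) (u v w : U) :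
    A.mul m u (A.mul n v w) - A.mul n v (A.mul m u w)
      = ∑ i ∈ Finset.range (m+1), ((m.choose i : ℕ) : ℂ) • A.mul (m+n-i) (A.mul i u v) w := by
  have h := A.jacobi 0 m n u v w
  have hL : (∑ᶠ i : ℕ, ((-1 : ℂ) ^ i * (Nat.choose 0 i : ℂ)) •
        (A.mul (m + 0 - i) u (A.mul (n + i) v w)
          - ((-1 : ℂ) ^ 0) • A.mul (n + 0 - i) v (A.mul (m + i) u w)))
      = A.mul m u (A.mul n v w) - A.mul n v (A.mul m u w) := by
    rw [finsum_eq_single _ 0 ?_]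
    · simp
    · intro i hi
      have : (0:ℕ).choose i = 0 := Nat.choose_eq_zero_of_lt (Nat.pos_of_ne_zero hi)
      simp [this]
  have hR : (∑ᶠ i : ℕ, ((Nat.choose m i : ℂ)) • A.mul (m + n - i) (A.mul (0 + i) u v) w)
      = ∑ i ∈ Finset.range (m+1), ((m.choose i : ℕ) : ℂ) • A.mul (m+n-i) (A.mul i u v) w := by
    have e : ∀ i : ℕ, A.mul (0 + i) u v = A.mul i u v := by intro i; rw [Nat.zero_add]
    have : (fun i : ℕ => ((Nat.choose m i : ℂ)) • A.mul (m + n - i) (A.mul (0 + i) u v) w)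
        = fun i : ℕ => ((m.choose i : ℕ) : ℂ) • A.mul (m+n-i) (A.mul i u v) w := by
      funext i; rw [e]
    rw [this]
    apply finsum_eq_sum_of_support_subset
    intro i hi
    simp only [Function.mem_support] at hi
    rw [Finset.coe_range]
    refine Set.mem_Iio.2 ?_
    by_contra hc
    push_neg at hc
    exact hi (by rw [Nat.choose_eq_zero_of_lt (by omega)]; simp)
  rw [← hL, ← hR, h]

lemma uniformR (A : VertexLie U) (u : U) (g : ℕ → U) {Q : ℕ} (hQ : ∀ b, Q ≤ b → g b = 0) :
    ∃ P : ℕ, ∀ b a, P ≤ a → A.mul a u (g b) = 0 := by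
  choose N hN using fun b => A.trunc u (g b)
  refine ⟨(Finset.range Q).sup N, fun b a ha => ?_⟩
  by_cases hb : b < Q
  · exact hN b a (le_trans (Finset.le_sup (Finset.mem_range.2 hb)) ha)
  · rw [hQ b (le_of_not_gt hb)]
    simp

lemma uniformL (A : VertexLie U) (w : U) (g : ℕ → U) {Q : ℕ} (hQ : ∀ b, Q ≤ b → g b = 0) :
    ∃ P : ℕ, ∀ b r, P ≤ r → A.mul r (g b) w = 0 := by
  choose N hN using fun b => A.trunc (g b) w
  refine ⟨(Finset.range Q).sup N, fun b r hr => ?_⟩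
  by_cases hb : b < Q
  · exact hN b r (le_trans (Finset.le_sup (Finset.mem_range.2 hb)) hr)
  · rw [hQ b (le_of_not_gt hb)]
    simp


lemma skew_part (A : VertexLie U) (u v : U) : brkt A v u = - brkt A u v := by
  obtain ⟨N1, hN1⟩ := A.trunc u v
  obtain ⟨N2, hN2⟩ := A.trunc v u
  set N := N1 + N2 with hNdef
  rw [brkt_eq_sum A v u (N := N) (fun n hn => hN2 n (by omega))]
  rw [brkt_eq_sum A u v (N := N) (fun n hn => hN1 n (by omega))]
  have hskew : ∀ n, A.mul n v u
      = -∑ k ∈ Finset.range N,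
          (((-1:ℂ)^(n+k)) / (Nat.factorial k : ℂ)) • ((A.D^k) (A.mul (n+k) u v)) := by
    intro n
    rw [A.skew n v u]
    congr 1
    apply finsum_eq_sum_of_support_subset
    intro k hk
    simp only [Function.mem_support] at hk
    rw [Finset.coe_range]
    refine Set.mem_Iio.2 ?_
    by_contra h
    push_neg at h
    exact hk (by rw [hN1 (n+k) (by omega)]; simp)
  have step1 : ∀ n ∈ Finset.range N,
      (((-1:ℂ)^n) / (Nat.factorial (n+1) : ℂ)) • ((A.D^(n+1)) (A.mul n v u))
        = ∑ k ∈ Finset.range N,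
            (-((((-1:ℂ)^n) / (Nat.factorial (n+1) : ℂ)) * (((-1:ℂ)^(n+k)) / (Nat.factorial k : ℂ))))
              • ((A.D^(n+1+k)) (A.mul (n+k) u v)) := by
    intro n _
    rw [hskew n, map_neg, smul_neg, map_sum, Finset.smul_sum]
    rw [← Finset.sum_neg_distrib]
    refine Finset.sum_congr rfl fun k _ => ?_
    rw [map_smul, smul_smul, powpow, ← neg_smul]
  rw [Finset.sum_congr rfl step1]
  rw [sum_rect_to_diag
    (fun n k => (-((((-1:ℂ)^n) / (Nat.factorial (n+1) : ℂ)) * (((-1:ℂ)^(n+k)) / (Nat.factorial k : ℂ))))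
              • ((A.D^(n+1+k)) (A.mul (n+k) u v))) N N N le_rfl le_rfl
    (fun n k hnk => by have h0 : A.mul (n+k) u v = 0 := hN1 (n+k) (by omega); simp [h0])]
  have step2 : ∀ s ∈ Finset.range N,
      (∑ i ∈ Finset.range (s+1),
        (-((((-1:ℂ)^i) / (Nat.factorial (i+1) : ℂ)) * (((-1:ℂ)^(i+(s-i))) / (Nat.factorial (s-i) : ℂ))))
          • ((A.D^(i+1+(s-i))) (A.mul (i+(s-i)) u v)))
      = -((((-1:ℂ)^s) / (Nat.factorial (s+1) : ℂ)) • ((A.D^(s+1)) (A.mul s u v))) := by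
    intro s _
    have e1 : ∀ i ∈ Finset.range (s+1),
        (-((((-1:ℂ)^i) / (Nat.factorial (i+1) : ℂ)) * (((-1:ℂ)^(i+(s-i))) / (Nat.factorial (s-i) : ℂ))))
          • ((A.D^(i+1+(s-i))) (A.mul (i+(s-i)) u v))
        = ((-(-1:ℂ)^s) * ((-1:ℂ)^i / ((Nat.factorial (i+1) : ℂ) * (Nat.factorial (s-i) : ℂ))))
          • ((A.D^(s+1)) (A.mul s u v)) := by
      intro i hi
      have his : i ≤ s := by have := Finset.mem_range.1 hi; omega
      rw [show i+(s-i) = s by omega, show i+1+(s-i) = s+1 by omega]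
      congr 1
      ring
    rw [Finset.sum_congr rfl e1, ← Finset.sum_smul, ← Finset.mul_sum]
    have := S3 s
    push_cast at this ⊢
    rw [this, ← neg_smul]
    congr 1
    field_simp
  rw [Finset.sum_congr rfl step2]
  rw [← Finset.sum_neg_distrib]

lemma L1 (A : VertexLie U) (u v w : U) (P Q : ℕ)
    (hQ : ∀ b, Q ≤ b → A.mul b v w = 0)
    (hP : ∀ b a, P ≤ a → A.mul a u (A.mul b v w) = 0) :
    brkt A u (brkt A v w)
      = ∑ a ∈ Finset.range P, ∑ b ∈ Finset.range Q,
          (((-1:ℂ)^(a+b)) / (Nat.factorial (a+b+2) : ℂ))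
            • ((A.D ^ (a+b+2)) (A.mul a u (A.mul b v w))) := by
  obtain ⟨M0, hM0⟩ := A.trunc u (brkt A v w)
  set M := M0 + (P + Q + 1) with hMdef
  rw [brkt_eq_sum A u (brkt A v w) (N := M) (fun n hn => hM0 n (by omega))]
  have hvw : brkt A v w = ∑ b ∈ Finset.range Q,
      (((-1:ℂ)^b) / (Nat.factorial (b+1) : ℂ)) • ((A.D^(b+1)) (A.mul b v w)) :=
    brkt_eq_sum A v w hQ
  have stepA : ∀ m ∈ Finset.range M,
      (((-1:ℂ)^m) / (Nat.factorial (m+1) : ℂ)) • ((A.D^(m+1)) (A.mul m u (brkt A v w)))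
      = ∑ b ∈ Finset.range Q, ∑ j ∈ Finset.range (b+1+1),
          ((((-1:ℂ)^m) / (Nat.factorial (m+1) : ℂ)) * ((((-1:ℂ)^b) / (Nat.factorial (b+1) : ℂ))
             * ((((b+1).choose j * j.factorial * (m.choose j) : ℕ)) : ℂ)))
            • ((A.D^(m+1)) ((A.D ^ ((b+1+1)-(j+1))) (A.mul (m-j) u (A.mul b v w)))) := by
    intro m _
    rw [hvw]
    simp only [map_sum, map_smul, claimA, Finset.smul_sum, smul_smul]
  rw [Finset.sum_congr rfl stepA]
  rw [Finset.sum_comm]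
  have stepB : ∀ b ∈ Finset.range Q,
      (∑ m ∈ Finset.range M, ∑ j ∈ Finset.range (b+1+1),
          ((((-1:ℂ)^m) / (Nat.factorial (m+1) : ℂ)) * ((((-1:ℂ)^b) / (Nat.factorial (b+1) : ℂ))
             * ((((b+1).choose j * j.factorial * (m.choose j) : ℕ)) : ℂ)))
            • ((A.D^(m+1)) ((A.D ^ ((b+1+1)-(j+1))) (A.mul (m-j) u (A.mul b v w)))))
      = ∑ a ∈ Finset.range P, ∑ j ∈ Finset.range (b+1+1),
          ((((-1:ℂ)^(j+a)) / (Nat.factorial ((j+a)+1) : ℂ)) * ((((-1:ℂ)^b) / (Nat.factorial (b+1) : ℂ))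
             * ((((b+1).choose j * j.factorial * ((j+a).choose j) : ℕ)) : ℂ)))
            • ((A.D^((j+a)+1)) ((A.D ^ ((b+1+1)-(j+1))) (A.mul ((j+a)-j) u (A.mul b v w)))) := by
    intro b hb
    have hbQ : b < Q := Finset.mem_range.1 hb
    rw [Finset.sum_comm]
    rw [Finset.sum_congr rfl (fun j hj => sum_shift
      (fun m => ((((-1:ℂ)^m) / (Nat.factorial (m+1) : ℂ)) * ((((-1:ℂ)^b) / (Nat.factorial (b+1) : ℂ))
             * ((((b+1).choose j * j.factorial * (m.choose j) : ℕ)) : ℂ)))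
            • ((A.D^(m+1)) ((A.D ^ ((b+1+1)-(j+1))) (A.mul (m-j) u (A.mul b v w)))))
      j P M
      (fun m hmj => by
        have h0 : m.choose j = 0 := Nat.choose_eq_zero_of_lt hmj
        simp [h0])
      (fun m hm => by
        have h0 : A.mul (m-j) u (A.mul b v w) = 0 := hP b (m-j) (by omega)
        simp [h0])
      (by have := Finset.mem_range.1 hj; omega))]
    rw [Finset.sum_comm]
  rw [Finset.sum_congr rfl stepB]
  have stepC : ∀ b ∈ Finset.range Q, ∀ a ∈ Finset.range P,
      (∑ j ∈ Finset.range (b+1+1),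
          ((((-1:ℂ)^(j+a)) / (Nat.factorial ((j+a)+1) : ℂ)) * ((((-1:ℂ)^b) / (Nat.factorial (b+1) : ℂ))
             * ((((b+1).choose j * j.factorial * ((j+a).choose j) : ℕ)) : ℂ)))
            • ((A.D^((j+a)+1)) ((A.D ^ ((b+1+1)-(j+1))) (A.mul ((j+a)-j) u (A.mul b v w)))))
      = (((-1:ℂ)^(a+b)) / (Nat.factorial (a+b+2) : ℂ))
            • ((A.D ^ (a+b+2)) (A.mul a u (A.mul b v w))) := by
    intro b _ a _
    have e1 : ∀ j ∈ Finset.range (b+1+1),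
        ((((-1:ℂ)^(j+a)) / (Nat.factorial ((j+a)+1) : ℂ)) * ((((-1:ℂ)^b) / (Nat.factorial (b+1) : ℂ))
             * ((((b+1).choose j * j.factorial * ((j+a).choose j) : ℕ)) : ℂ)))
            • ((A.D^((j+a)+1)) ((A.D ^ ((b+1+1)-(j+1))) (A.mul ((j+a)-j) u (A.mul b v w))))
        = ((((-1:ℂ)^b) / (Nat.factorial (b+1) : ℂ))
            * ((-1:ℂ)^(a+j) * (((b+1).choose j : ℕ) : ℂ) * ((j.factorial : ℕ) : ℂ)
                * (((a+j).choose j : ℕ) : ℂ) / (((a+j+1).factorial : ℕ) : ℂ)))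
          • ((A.D ^ (a+b+2)) (A.mul a u (A.mul b v w))) := by
      intro j hj
      have hjb : j ≤ b+1 := by have := Finset.mem_range.1 hj; omega
      rw [show (j+a)-j = a by omega, powpow, show (j+a)+1+((b+1+1)-(j+1)) = a+b+2 by omega]
      congr 1
      rw [Nat.add_comm j a]
      push_cast
      ring
    rw [Finset.sum_congr rfl e1, ← Finset.sum_smul, ← Finset.mul_sum, S1 (b+1) a]
    congr 1
    rw [show a+(b+1)+1 = a+b+2 by omega]
    have h1 := factC_ne (b+1)
    have h2 := factC_ne (a+b+2)
    push_cast at h1 h2 ⊢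
    field_simp
    ring
  rw [Finset.sum_congr rfl (fun b hb => Finset.sum_congr rfl (fun a ha => stepC b hb a ha))]
  rw [Finset.sum_comm]

lemma jacobi_part (A : VertexLie U) (u v w : U) :
    brkt A u (brkt A v w) - brkt A v (brkt A u w) = brkt A (brkt A u v) w := by
  obtain ⟨Qvw, hQvw⟩ := A.trunc v w
  obtain ⟨Quw, hQuw⟩ := A.trunc u w
  obtain ⟨K, hK⟩ := A.trunc u v
  obtain ⟨P1, hP1⟩ := uniformR A u (fun b => A.mul b v w) hQvw
  obtain ⟨P2, hP2⟩ := uniformR A v (fun b => A.mul b u w) hQuw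
  obtain ⟨W, hW⟩ := uniformL A w (fun i => A.mul i u v) hK
  set R := P1 + P2 + Qvw + Quw + K + W with hRdef
  rw [L1 A u v w R R (fun b hb => hQvw b (by omega)) (fun b a ha => hP1 b a (by omega))]
  rw [L1 A v u w R R (fun b hb => hQuw b (by omega)) (fun b a ha => hP2 b a (by omega))]
  have hBswap : (∑ a ∈ Finset.range R, ∑ b ∈ Finset.range R,
        (((-1:ℂ)^(a+b)) / (Nat.factorial (a+b+2) : ℂ))
          • ((A.D ^ (a+b+2)) (A.mul a v (A.mul b u w))))
      = ∑ a ∈ Finset.range R, ∑ b ∈ Finset.range R,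
        (((-1:ℂ)^(a+b)) / (Nat.factorial (a+b+2) : ℂ))
          • ((A.D ^ (a+b+2)) (A.mul b v (A.mul a u w))) := by
    rw [Finset.sum_comm]
    refine Finset.sum_congr rfl fun a _ => Finset.sum_congr rfl fun b _ => ?_
    rw [Nat.add_comm b a]
  rw [hBswap]
  rw [← Finset.sum_sub_distrib]
  have step1 : ∀ a ∈ Finset.range R,
      ((∑ b ∈ Finset.range R,
          (((-1:ℂ)^(a+b)) / (Nat.factorial (a+b+2) : ℂ))
            • ((A.D ^ (a+b+2)) (A.mul a u (A.mul b v w))))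
        - ∑ b ∈ Finset.range R,
          (((-1:ℂ)^(a+b)) / (Nat.factorial (a+b+2) : ℂ))
            • ((A.D ^ (a+b+2)) (A.mul b v (A.mul a u w))))
      = ∑ b ∈ Finset.range R, ∑ i ∈ Finset.range R,
          ((((-1:ℂ)^(a+b)) / (Nat.factorial (a+b+2) : ℂ)) * ((a.choose i : ℕ) : ℂ))
            • ((A.D^(a+b+2)) (A.mul (a+b-i) (A.mul i u v) w)) := by
    intro a ha
    rw [← Finset.sum_sub_distrib]
    refine Finset.sum_congr rfl fun b _ => ?_
    rw [← smul_sub, ← map_sub, comm_formula A a b u v w, map_sum, Finset.smul_sum]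
    rw [Finset.sum_congr rfl (fun i (_ : i ∈ Finset.range (a+1)) => by
      rw [map_smul, smul_smul])]
    exact (sum_shrink _ (show a+1 ≤ R by have := Finset.mem_range.1 ha; omega)
      (fun i hi => by
        have h0 : a.choose i = 0 := Nat.choose_eq_zero_of_lt (by omega)
        simp [h0])).symm
  rw [Finset.sum_congr rfl step1]
  rw [Finset.sum_congr rfl (fun a (_ : a ∈ Finset.range R) => Finset.sum_comm)]
  rw [Finset.sum_comm]
  rw [sum_shrink (fun i => ∑ a ∈ Finset.range R, ∑ b ∈ Finset.range R,
        ((((-1:ℂ)^(a+b)) / (Nat.factorial (a+b+2) : ℂ)) * ((a.choose i : ℕ) : ℂ))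
          • ((A.D^(a+b+2)) (A.mul (a+b-i) (A.mul i u v) w)))
      (show K ≤ R by omega)
      (fun i hi => Finset.sum_eq_zero fun a _ => Finset.sum_eq_zero fun b _ => by
        have h0 : A.mul i u v = 0 := hK i hi
        simp [h0])]
  have step2 : ∀ i ∈ Finset.range K,
      (∑ a ∈ Finset.range R, ∑ b ∈ Finset.range R,
        ((((-1:ℂ)^(a+b)) / (Nat.factorial (a+b+2) : ℂ)) * ((a.choose i : ℕ) : ℂ))
          • ((A.D^(a+b+2)) (A.mul (a+b-i) (A.mul i u v) w)))
      = ∑ r ∈ Finset.range W,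
          ((((-1:ℂ)^(i+r)) / (Nat.factorial (i+r+2) : ℂ)) * (((r+i+1).choose (i+1) : ℕ) : ℂ))
            • ((A.D^(i+r+2)) (A.mul r (A.mul i u v) w)) := by
    intro i hi
    have hiK : i < K := Finset.mem_range.1 hi
    rw [Finset.sum_comm]
    rw [Finset.sum_congr rfl (fun b (_ : b ∈ Finset.range R) => sum_shift
      (fun a => ((((-1:ℂ)^(a+b)) / (Nat.factorial (a+b+2) : ℂ)) * ((a.choose i : ℕ) : ℂ))
          • ((A.D^(a+b+2)) (A.mul (a+b-i) (A.mul i u v) w)))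
      i W R
      (fun a hai => by
        have h0 : a.choose i = 0 := Nat.choose_eq_zero_of_lt hai
        simp [h0])
      (fun a haw => by
        have h0 : A.mul (a+b-i) (A.mul i u v) w = 0 := hW i (a+b-i) (by omega)
        simp [h0])
      (by omega))]
    rw [Finset.sum_comm]
    rw [sum_rect_to_diag
      (fun p b => ((((-1:ℂ)^((i+p)+b)) / (Nat.factorial ((i+p)+b+2) : ℂ)) * (((i+p).choose i : ℕ) : ℂ))
          • ((A.D^((i+p)+b+2)) (A.mul ((i+p)+b-i) (A.mul i u v) w)))
      W R W le_rfl (by omega)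
      (fun p b hpb => by
        have h0 : A.mul ((i+p)+b-i) (A.mul i u v) w = 0 := hW i ((i+p)+b-i) (by omega)
        simp [h0])]
    refine Finset.sum_congr rfl fun r _ => ?_
    have e2 : ∀ q ∈ Finset.range (r+1),
        ((((-1:ℂ)^((i+q)+(r-q))) / (Nat.factorial ((i+q)+(r-q)+2) : ℂ)) * (((i+q).choose i : ℕ) : ℂ))
          • ((A.D^((i+q)+(r-q)+2)) (A.mul ((i+q)+(r-q)-i) (A.mul i u v) w))
        = ((((-1:ℂ)^(i+r)) / (Nat.factorial (i+r+2) : ℂ)) * (((i+q).choose i : ℕ) : ℂ))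
            • ((A.D^(i+r+2)) (A.mul r (A.mul i u v) w)) := by
      intro q hq
      have hqr : q ≤ r := by have := Finset.mem_range.1 hq; omega
      rw [show (i+q)+(r-q)-i = r by omega, show (i+q)+(r-q) = i+r by omega]
    rw [Finset.sum_congr rfl e2, ← Finset.sum_smul, ← Finset.mul_sum]
    have hcast : ∑ q ∈ Finset.range (r+1), (((i+q).choose i : ℕ) : ℂ)
        = (((r+i+1).choose (i+1) : ℕ) : ℂ) := by
      rw [Finset.sum_congr rfl (fun q (_ : q ∈ Finset.range (r+1)) => by rw [Nat.add_comm i q])]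
      exact_mod_cast congrArg (Nat.cast : ℕ → ℂ) (Nat.sum_range_add_choose r i)
    rw [hcast]
  rw [Finset.sum_congr rfl step2]
  obtain ⟨M1, hM1⟩ := A.trunc (brkt A u v) w
  set M' := M1 + (K + W + 1) with hM'def
  have huv : brkt A u v = ∑ k ∈ Finset.range K,
      (((-1:ℂ)^k) / (Nat.factorial (k+1) : ℂ)) • ((A.D^(k+1)) (A.mul k u v)) :=
    brkt_eq_sum A u v hK
  rw [brkt_eq_sum A (brkt A u v) w (N := M') (fun n hn => hM1 n (by omega))]
  have stepR1 : ∀ m ∈ Finset.range M',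
      (((-1:ℂ)^m) / (Nat.factorial (m+1) : ℂ)) • ((A.D^(m+1)) (A.mul m (brkt A u v) w))
      = ∑ k ∈ Finset.range K,
          ((((-1:ℂ)^m) / (Nat.factorial (m+1) : ℂ)) * ((((-1:ℂ)^k) / (Nat.factorial (k+1) : ℂ))
            * (((-1:ℂ))^(k+1) * ((((k+1).factorial * m.choose (k+1) : ℕ)) : ℂ))))
          • ((A.D^(m+1)) (A.mul (m-(k+1)) (A.mul k u v) w)) := by
    intro m _
    rw [huv]
    simp only [map_sum, map_smul, LinearMap.sum_apply, LinearMap.smul_apply, claimB,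
      Finset.smul_sum, smul_smul]
  conv_rhs => rw [Finset.sum_congr rfl stepR1, Finset.sum_comm]
  have stepR2 : ∀ k ∈ Finset.range K,
      (∑ m ∈ Finset.range M',
        ((((-1:ℂ)^m) / (Nat.factorial (m+1) : ℂ)) * ((((-1:ℂ)^k) / (Nat.factorial (k+1) : ℂ))
            * (((-1:ℂ))^(k+1) * ((((k+1).factorial * m.choose (k+1) : ℕ)) : ℂ))))
          • ((A.D^(m+1)) (A.mul (m-(k+1)) (A.mul k u v) w)))
      = ∑ r ∈ Finset.range W,
          ((((-1:ℂ)^(k+r)) / (Nat.factorial (k+r+2) : ℂ)) * (((r+k+1).choose (k+1) : ℕ) : ℂ))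
            • ((A.D^(k+r+2)) (A.mul r (A.mul k u v) w)) := by
    intro k hk
    have hkK : k < K := Finset.mem_range.1 hk
    rw [sum_shift
      (fun m => ((((-1:ℂ)^m) / (Nat.factorial (m+1) : ℂ)) * ((((-1:ℂ)^k) / (Nat.factorial (k+1) : ℂ))
            * (((-1:ℂ))^(k+1) * ((((k+1).factorial * m.choose (k+1) : ℕ)) : ℂ))))
          • ((A.D^(m+1)) (A.mul (m-(k+1)) (A.mul k u v) w)))
      (k+1) W M'
      (fun m hm => by
        have h0 : m.choose (k+1) = 0 := Nat.choose_eq_zero_of_lt hm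
        simp [h0])
      (fun m hm => by
        have h0 : A.mul (m-(k+1)) (A.mul k u v) w = 0 := hW k (m-(k+1)) (by omega)
        simp [h0])
      (by omega)]
    refine Finset.sum_congr rfl fun r _ => ?_
    rw [show (k+1)+r-(k+1) = r by omega]
    rw [show (k+1)+r+1 = k+r+2 by omega]
    rw [show (k+1)+r = r+k+1 by omega]
    congr 1
    have hs : (-1:ℂ)^(r+k+1) * ((-1:ℂ)^k * (-1:ℂ)^(k+1)) = (-1:ℂ)^(k+r) := by
      rw [← pow_add, ← pow_add, show r+k+1+(k+(k+1)) = (k+r)+2*(k+1) by omega, pow_add, pow_mul]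
      norm_num
    have h1 := factC_ne (k+1)
    have h2 := factC_ne (k+r+2)
    push_cast at h1 h2 ⊢
    rw [← hs]
    field_simp
  rw [Finset.sum_congr rfl stepR2]

/-- the bracket `[u,v] = Σ_{n≥0} ((−1)ⁿ/(n+1)!)·D^{n+1}(uₙv)` makes a
vertex Lie algebra `U` into a Lie algebra: it is skew symmetric and satisfies the
Jacobi identity `[u,[v,w]] − [v,[u,w]] = [[u,v],w]`. -/
theorem stmt6 (A : VertexLie U) :
    (∀ u v : U, brkt A v u = -brkt A u v) ∧
    (∀ u v w : U,
      brkt A u (brkt A v w) - brkt A v (brkt A u w) = brkt A (brkt A u v) w) :=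
  ⟨fun u v => skew_part A u v, fun u v w => jacobi_part A u v w⟩

end
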